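/- arXiv:1010.3475 — 2 statements merged into one kernel-verified Lean document; each statement's English description precedes it below -/
import Mathlib

section
/- Let Z ⊂ ℝ² \ {0} be a set, and suppose there exists R > 0 such that for every A ∈ SL₂(ℝ), the set A·Z contains a vector of Euclidean length at most R. Then the Minkowski constant of Z satisfies μ(Z) ≤ (π/2)·R², i.e., every bounded convex origin-symmetric set C with area(C) ≥ 2πR² contains a point of Z. -/
open MeasureTheory
open scoped ENNReal NNReal

/-- Action of a `2 × 2` matrix on a vector of `ℝ²`. -/
def matAct (A : Matrix (Fin 2) (Fin 2) ℝ) (v : ℝ × ℝ) : ℝ × ℝ :=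
  (A 0 0 * v.1 + A 0 1 * v.2, A 1 0 * v.1 + A 1 1 * v.2)

namespace MkAux

/-- explicit inverse of a 2×2 matrix of determinant 1 -/
def matInv (A : Matrix (Fin 2) (Fin 2) ℝ) : Matrix (Fin 2) (Fin 2) ℝ :=
  !![A 1 1, -(A 0 1); -(A 1 0), A 0 0]

lemma matAct_mul (A B : Matrix (Fin 2) (Fin 2) ℝ) (v : ℝ × ℝ) :
    matAct (A * B) v = matAct A (matAct B v) := by
  simp [matAct, Matrix.mul_apply, Fin.sum_univ_two]
  constructor <;> ring

lemma matAct_one (v : ℝ × ℝ) : matAct 1 v = v := by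
  simp [matAct, Matrix.one_apply]

lemma matInv_act (A : Matrix (Fin 2) (Fin 2) ℝ) (h : A.det = 1) (v : ℝ × ℝ) :
    matAct (matInv A) (matAct A v) = v := by
  rw [Matrix.det_fin_two] at h
  simp only [matAct, matInv, Matrix.cons_val', Matrix.cons_val_zero, Matrix.cons_val_one,
    Matrix.head_cons, Matrix.empty_val', Matrix.cons_val_fin_one, Matrix.head_fin_const,
    Matrix.of_apply]
  rw [Prod.ext_iff]
  constructor
  · linear_combination v.1 * h
  · linear_combination v.2 * h

lemma act_matInv (A : Matrix (Fin 2) (Fin 2) ℝ) (h : A.det = 1) (v : ℝ × ℝ) :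
    matAct A (matAct (matInv A) v) = v := by
  rw [Matrix.det_fin_two] at h
  simp only [matAct, matInv, Matrix.cons_val', Matrix.cons_val_zero, Matrix.cons_val_one,
    Matrix.head_cons, Matrix.empty_val', Matrix.cons_val_fin_one, Matrix.head_fin_const,
    Matrix.of_apply]
  rw [Prod.ext_iff]
  constructor
  · linear_combination v.1 * h
  · linear_combination v.2 * h

/-- `matAct A` as a linear map. -/
def matL (A : Matrix (Fin 2) (Fin 2) ℝ) : (ℝ × ℝ) →ₗ[ℝ] (ℝ × ℝ) where
  toFun := matAct A
  map_add' x y := by simp [matAct, Prod.ext_iff]; constructor <;> ring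
  map_smul' t x := by simp [matAct, Prod.ext_iff, smul_eq_mul]; constructor <;> ring

lemma det_matL (A : Matrix (Fin 2) (Fin 2) ℝ) : LinearMap.det (matL A) = A.det := by
  have : matL A = Matrix.toLin (Module.Basis.finTwoProd ℝ) (Module.Basis.finTwoProd ℝ) A := by
    apply LinearMap.ext
    intro v
    rw [Matrix.toLin_apply]
    simp [matL, matAct, Fin.sum_univ_two, Matrix.mulVec, dotProduct, Prod.ext_iff,
      Fin.sum_univ_two]
  rw [this, LinearMap.det_toLin]

lemma cont_matAct (A : Matrix (Fin 2) (Fin 2) ℝ) : Continuous (matAct A) := by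
  unfold matAct
  fun_prop

lemma vol_image (A : Matrix (Fin 2) (Fin 2) ℝ) (h : A.det = 1) (s : Set (ℝ × ℝ)) :
    volume (matAct A '' s) = volume s := by
  have : matAct A '' s = (matL A) '' s := rfl
  rw [this, Measure.addHaar_image_linearMap, det_matL, h]
  simp

/-- volume of the euclidean disk of squared radius `m`. -/
lemma vol_disk (m : ℝ) (hm : 0 ≤ m) :
    volume {v : ℝ × ℝ | v.1 ^ 2 + v.2 ^ 2 ≤ m} = ENNReal.ofReal (Real.pi * m) := by
  have hmeas : MeasurableSet {v : ℝ × ℝ | v.1 ^ 2 + v.2 ^ 2 ≤ m} := by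
    apply measurableSet_le <;> fun_prop
  have hpre : Complex.measurableEquivRealProd ⁻¹' {v : ℝ × ℝ | v.1 ^ 2 + v.2 ^ 2 ≤ m}
      = Metric.closedBall (0 : ℂ) (Real.sqrt m) := by
    ext z
    simp only [Set.mem_preimage, Complex.measurableEquivRealProd_apply, Set.mem_setOf_eq,
      Metric.mem_closedBall, Complex.dist_eq, sub_zero, Complex.norm_def, Complex.normSq_apply]
    rw [show z.re * z.re + z.im * z.im = z.re ^ 2 + z.im ^ 2 by ring]
    constructor
    · intro h
      exact Real.sqrt_le_sqrt h
    · intro h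
      calc z.re ^ 2 + z.im ^ 2 = Real.sqrt (z.re ^ 2 + z.im ^ 2) ^ 2 := by
            rw [Real.sq_sqrt (by positivity)]
        _ ≤ Real.sqrt m ^ 2 := by
            apply pow_le_pow_left₀ (Real.sqrt_nonneg _) h
        _ = m := Real.sq_sqrt hm
  rw [← Complex.volume_preserving_equiv_real_prod.measure_preimage hmeas.nullMeasurableSet,
    hpre, Complex.volume_closedBall]
  rw [← ENNReal.ofReal_pow (Real.sqrt_nonneg m), Real.sq_sqrt hm]
  rw [show ((NNReal.pi : ℝ≥0∞)) = ENNReal.ofReal Real.pi by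
    rw [ENNReal.ofReal, ← NNReal.coe_real_pi, Real.toNNReal_coe]]
  rw [← ENNReal.ofReal_mul hm, mul_comm]


section Ellipse

variable {K' : Set (ℝ × ℝ)} {r d : ℝ}

lemma ellipse_mem_aux (hr : 0 < r) (hd0 : 0 < d) (hd : 2 * r ^ 2 < d ^ 2)
    (hconv : Convex ℝ K')
    (hball : ∀ v : ℝ × ℝ, v.1 ^ 2 + v.2 ^ 2 ≤ r ^ 2 → v ∈ K')
    (hp : ((d : ℝ), (0 : ℝ)) ∈ K') {x y : ℝ} (hx : 0 ≤ x)
    (hell : 2 * x ^ 2 * r ^ 2 + 2 * y ^ 2 * (d ^ 2 - r ^ 2) ≤ d ^ 2 * r ^ 2) :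
    (x, y) ∈ K' := by
  have hΔ : 0 < d ^ 2 - r ^ 2 := by nlinarith
  by_cases hc : d * x ≤ r ^ 2
  · -- the point is already in the disk
    apply hball
    have h1 : (d * x) ^ 2 ≤ (r ^ 2) ^ 2 := by nlinarith [mul_nonneg hd0.le hx]
    have hx2 : 2 * x ^ 2 ≤ r ^ 2 := by nlinarith
    have h3 : (d ^ 2 - 2 * r ^ 2) * (r ^ 2 - 2 * x ^ 2) ≥ 0 :=
      mul_nonneg (by linarith) (by linarith)
    have h4 : 2 * (d ^ 2 - r ^ 2) * (r ^ 2 - x ^ 2 - y ^ 2) ≥ 0 := by nlinarith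
    simp only
    nlinarith [h4, hΔ]
  · push_neg at hc
    set t : ℝ := (d * x - r ^ 2) / (d ^ 2 - r ^ 2) with ht_def
    have ht0 : 0 < t := by
      apply div_pos (by linarith) hΔ
    have hxd : x < d := by
      have hx2 : 2 * x ^ 2 * r ^ 2 ≤ d ^ 2 * r ^ 2 := by
        nlinarith [mul_nonneg (sq_nonneg y) hΔ.le]
      have hx3 : x ^ 2 < d ^ 2 := by nlinarith [mul_pos hr hr]
      by_contra hge
      push_neg at hge
      exact absurd (pow_le_pow_left₀ hd0.le hge 2) (by linarith)
    have ht1 : t < 1 := by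
      rw [div_lt_one hΔ]
      nlinarith
    have h1t : 0 < 1 - t := by linarith
    set w : ℝ × ℝ := ((x - t * d) / (1 - t), y / (1 - t)) with hw_def
    have hweq1 : (x - t * d) * (d ^ 2 - r ^ 2) = r ^ 2 * (d - x) := by
      have ht : t * (d ^ 2 - r ^ 2) = d * x - r ^ 2 := by
        rw [ht_def]; exact div_mul_cancel₀ _ hΔ.ne'
      linear_combination (-d) * ht
    have hweq2 : (1 - t) * (d ^ 2 - r ^ 2) = d * (d - x) := by
      have ht : t * (d ^ 2 - r ^ 2) = d * x - r ^ 2 := by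
        rw [ht_def]; exact div_mul_cancel₀ _ hΔ.ne'
      linear_combination (-1) * ht
    have keym : ((x - t * d) ^ 2 + y ^ 2) * (d ^ 2 - r ^ 2) ^ 2
        ≤ (r ^ 2 * (1 - t) ^ 2) * (d ^ 2 - r ^ 2) ^ 2 := by
      have l1 : ((x - t * d) * (d ^ 2 - r ^ 2)) ^ 2 = (r ^ 2 * (d - x)) ^ 2 := by
        rw [hweq1]
      have l2 : ((1 - t) * (d ^ 2 - r ^ 2)) ^ 2 = (d * (d - x)) ^ 2 := by rw [hweq2]
      nlinarith [l1, l2, sq_nonneg (d - 2 * x), hell, hΔ,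
        mul_nonneg (mul_nonneg hr.le hr.le) (sq_nonneg (d - 2*x))]
    have key : (x - t * d) ^ 2 + y ^ 2 ≤ r ^ 2 * (1 - t) ^ 2 :=
      le_of_mul_le_mul_right keym (by positivity)
    have hwK : w ∈ K' := by
      apply hball
      simp only [hw_def]
      rw [div_pow, div_pow, ← add_div, div_le_iff₀ (by positivity)]
      linarith [key]
    have hmem := hconv hp hwK ht0.le h1t.le (by ring : t + (1 - t) = 1)
    have : t • ((d : ℝ), (0 : ℝ)) + (1 - t) • w = (x, y) := by
      simp only [hw_def, Prod.smul_mk, smul_eq_mul, Prod.mk_add_mk, Prod.mk.injEq]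
      constructor
      · field_simp
        try ring
      · field_simp
        ring
    rwa [this] at hmem

lemma ellipse_mem (hr : 0 < r) (hd0 : 0 < d) (hd : 2 * r ^ 2 < d ^ 2)
    (hconv : Convex ℝ K') (hsym : ∀ v ∈ K', -v ∈ K')
    (hball : ∀ v : ℝ × ℝ, v.1 ^ 2 + v.2 ^ 2 ≤ r ^ 2 → v ∈ K')
    (hp : ((d : ℝ), (0 : ℝ)) ∈ K') {x y : ℝ}
    (hell : 2 * x ^ 2 * r ^ 2 + 2 * y ^ 2 * (d ^ 2 - r ^ 2) ≤ d ^ 2 * r ^ 2) :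
    (x, y) ∈ K' := by
  rcases le_or_gt 0 x with hx | hx
  · exact ellipse_mem_aux hr hd0 hd hconv hball hp hx hell
  · have h := ellipse_mem_aux hr hd0 hd hconv hball hp (x := -x) (y := -y)
      (by linarith) (by nlinarith)
    have := hsym _ h
    simpa using this


lemma improve (hr : 0 < r) (hd0 : 0 < d) (hd : 2 * r ^ 2 < d ^ 2)
    (hconv : Convex ℝ K') (hsym : ∀ v ∈ K', -v ∈ K')
    (hball : ∀ v : ℝ × ℝ, v.1 ^ 2 + v.2 ^ 2 ≤ r ^ 2 → v ∈ K')
    (hp : ((d : ℝ), (0 : ℝ)) ∈ K') :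
    ∃ (T : Matrix (Fin 2) (Fin 2) ℝ) (ρ : ℝ), T.det = 1 ∧ r < ρ ∧
      ∀ v : ℝ × ℝ, v.1 ^ 2 + v.2 ^ 2 ≤ ρ ^ 2 → v ∈ matAct T '' K' := by
  have hΔ : 0 < d ^ 2 - r ^ 2 := by nlinarith
  have hsΔ : 0 < Real.sqrt (d ^ 2 - r ^ 2) := Real.sqrt_pos.2 hΔ
  set a : ℝ := d / Real.sqrt 2 with ha_def
  set b : ℝ := r * d / Real.sqrt (2 * (d ^ 2 - r ^ 2)) with hb_def
  have hs2 : (0:ℝ) < Real.sqrt 2 := Real.sqrt_pos.2 (by norm_num)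
  have hs2Δ : (0:ℝ) < Real.sqrt (2 * (d ^ 2 - r ^ 2)) := Real.sqrt_pos.2 (by positivity)
  have ha : 0 < a := by positivity
  have hb : 0 < b := by positivity
  have ha2 : a ^ 2 = d ^ 2 / 2 := by
    rw [ha_def, div_pow, Real.sq_sqrt (by norm_num : (0:ℝ) ≤ 2)]
  have hb2 : 2 * (d ^ 2 - r ^ 2) * b ^ 2 = r ^ 2 * d ^ 2 := by
    rw [hb_def, div_pow, Real.sq_sqrt (by positivity : (0:ℝ) ≤ 2 * (d ^ 2 - r ^ 2))]
    field_simp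
  have h2Δ : Real.sqrt 2 * Real.sqrt (2 * (d ^ 2 - r ^ 2))
      = 2 * Real.sqrt (d ^ 2 - r ^ 2) := by
    rw [← Real.sqrt_mul (by norm_num : (0:ℝ) ≤ 2)]
    rw [show 2 * (2 * (d ^ 2 - r ^ 2)) = (2 * Real.sqrt (d ^ 2 - r ^ 2)) ^ 2 by
      rw [mul_pow, Real.sq_sqrt hΔ.le]; ring]
    exact Real.sqrt_sq (by positivity)
  have hprod : a * b * (2 * Real.sqrt (d ^ 2 - r ^ 2)) = r * d ^ 2 := by
    rw [ha_def, hb_def, div_mul_div_comm, ← h2Δ]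
    field_simp
  have hkey : 2 * r * Real.sqrt (d ^ 2 - r ^ 2) < d ^ 2 := by
    have h1 : (2 * r * Real.sqrt (d ^ 2 - r ^ 2)) ^ 2 = 4 * r ^ 2 * (d ^ 2 - r ^ 2) := by
      rw [mul_pow, mul_pow, Real.sq_sqrt hΔ.le]
      ring
    nlinarith [h1, hsΔ, hr, sq_nonneg (d ^ 2 - 2 * r ^ 2), mul_pos (mul_pos two_pos hr) hsΔ]
  have hr2ab : r ^ 2 < a * b := by
    have h5 : r ^ 2 * (2 * Real.sqrt (d ^ 2 - r ^ 2)) < a * b *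
        (2 * Real.sqrt (d ^ 2 - r ^ 2)) := by
      rw [hprod]
      nlinarith [hkey, hr]
    exact lt_of_mul_lt_mul_right h5 (by positivity)
  set ρ : ℝ := Real.sqrt (a * b) with hρ_def
  have hρ2 : ρ ^ 2 = a * b := Real.sq_sqrt (by positivity)
  have hρpos : 0 < ρ := Real.sqrt_pos.2 (by positivity)
  have hrρ : r < ρ := (Real.lt_sqrt hr.le).2 hr2ab
  refine ⟨!![ρ / a, 0; 0, ρ / b], ρ, ?_, hrρ, ?_⟩
  · rw [Matrix.det_fin_two_of]
    field_simp
    rw [← hρ2]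
    ring
  · intro v hv
    refine ⟨(v.1 * a / ρ, v.2 * b / ρ), ?_, ?_⟩
    · apply ellipse_mem hr hd0 hd hconv hsym hball hp
      have hμ : 2 * v.1 ^ 2 * a ^ 2 * r ^ 2 + 2 * v.2 ^ 2 * b ^ 2 * (d ^ 2 - r ^ 2)
          ≤ d ^ 2 * r ^ 2 * ρ ^ 2 := by
        have e1 : 2 * v.1 ^ 2 * a ^ 2 * r ^ 2 = v.1 ^ 2 * (d ^ 2 * r ^ 2) := by
          rw [ha2]; ring
        have e2 : 2 * v.2 ^ 2 * b ^ 2 * (d ^ 2 - r ^ 2) = v.2 ^ 2 * (r ^ 2 * d ^ 2) := by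
          rw [show 2 * v.2 ^ 2 * b ^ 2 * (d ^ 2 - r ^ 2)
            = v.2 ^ 2 * (2 * (d ^ 2 - r ^ 2) * b ^ 2) by ring, hb2]
        rw [e1, e2]
        nlinarith [mul_le_mul_of_nonneg_left hv (by positivity : (0:ℝ) ≤ d ^ 2 * r ^ 2)]
      calc 2 * (v.1 * a / ρ) ^ 2 * r ^ 2 + 2 * (v.2 * b / ρ) ^ 2 * (d ^ 2 - r ^ 2)
          = (2 * v.1 ^ 2 * a ^ 2 * r ^ 2 + 2 * v.2 ^ 2 * b ^ 2 * (d ^ 2 - r ^ 2)) / ρ ^ 2 := by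
            field_simp
        _ ≤ d ^ 2 * r ^ 2 := by
            rw [div_le_iff₀ (by positivity)]
            linarith [hμ]
    · simp only [matAct, Matrix.cons_val', Matrix.cons_val_zero, Matrix.cons_val_one,
        Matrix.head_cons, Matrix.empty_val', Matrix.cons_val_fin_one, Matrix.head_fin_const,
        Matrix.of_apply]
      rw [Prod.ext_iff]
      constructor <;> · simp only; field_simp; ring

end Ellipse


lemma matAct_mk (a b c e : ℝ) (v : ℝ × ℝ) :
    matAct !![a, b; c, e] v = (a * v.1 + b * v.2, c * v.1 + e * v.2) := by
  simp [matAct]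

lemma matInv_mk (a b c e : ℝ) : matInv !![a, b; c, e] = !![e, -b; -c, a] := by
  unfold matInv
  congr 1 <;> simp

lemma matAct_neg (A : Matrix (Fin 2) (Fin 2) ℝ) (v : ℝ × ℝ) :
    matAct A (-v) = -(matAct A v) := by
  simp [matAct, Prod.ext_iff]
  constructor <;> ring

lemma image_mul (A B : Matrix (Fin 2) (Fin 2) ℝ) (S : Set (ℝ × ℝ)) :
    matAct (A * B) '' S = matAct A '' (matAct B '' S) := by
  rw [Set.image_image]
  apply Set.image_congr
  intro v _
  rw [matAct_mul]

lemma image_sym (A : Matrix (Fin 2) (Fin 2) ℝ) (S : Set (ℝ × ℝ))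
    (hS : ∀ v ∈ S, -v ∈ S) : ∀ v ∈ matAct A '' S, -v ∈ matAct A '' S := by
  rintro v ⟨k, hk, rfl⟩
  exact ⟨-k, hS k hk, matAct_neg A k⟩

lemma sq_est {q v : ℝ × ℝ} {R e s : ℝ} (hR : 0 < R) (hq1 : |q.1| ≤ R) (hq2 : |q.2| ≤ R)
    (h1 : |v.1 - q.1| ≤ e) (h2 : |v.2 - q.2| ≤ e) (he : 0 ≤ e) (heR : e ≤ R)
    (hqq : q.1 ^ 2 + q.2 ^ 2 ≤ R ^ 2) (hs : R ^ 2 + 6 * e * R ≤ s) :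
    v.1 ^ 2 + v.2 ^ 2 ≤ s := by
  have c1 : q.1 * (v.1 - q.1) ≤ R * e :=
    le_trans (le_abs_self _) (by rw [abs_mul]; exact mul_le_mul hq1 h1 (abs_nonneg _) hR.le)
  have c2 : q.2 * (v.2 - q.2) ≤ R * e :=
    le_trans (le_abs_self _) (by rw [abs_mul]; exact mul_le_mul hq2 h2 (abs_nonneg _) hR.le)
  have d1 : (v.1 - q.1) ^ 2 ≤ e ^ 2 := by
    rw [← sq_abs]
    exact pow_le_pow_left₀ (abs_nonneg _) h1 2
  have d2 : (v.2 - q.2) ^ 2 ≤ e ^ 2 := by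
    rw [← sq_abs]
    exact pow_le_pow_left₀ (abs_nonneg _) h2 2
  nlinarith [c1, c2, d1, d2, he, heR, hR]

set_option maxHeartbeats 2000000 in
lemma key (R : ℝ) (hR : 0 < R) (C : Set (ℝ × ℝ)) (hCc : Convex ℝ C)
    (hCb : Bornology.IsBounded C) (hCs : ∀ x ∈ C, -x ∈ C)
    (hCv : ENNReal.ofReal (2 * Real.pi * R ^ 2) ≤ volume C) :
    ∃ A : Matrix (Fin 2) (Fin 2) ℝ, A.det = 1 ∧
      ∀ v : ℝ × ℝ, v.1 ^ 2 + v.2 ^ 2 ≤ R ^ 2 → v ∈ matAct A '' C := by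
  have hπ := Real.pi_pos
  have hvolpos : (0:ℝ) < 2 * Real.pi * R ^ 2 := by positivity
  set K : Set (ℝ × ℝ) := closure C with hK_def
  have hCK : C ⊆ K := subset_closure
  have hKconv : Convex ℝ K := hCc.closure
  have hKclosed : IsClosed K := isClosed_closure
  have hKcompact : IsCompact K := by
    apply Metric.isCompact_of_isClosed_isBounded hKclosed hCb.closure
  have hKsym : ∀ v ∈ K, -v ∈ K := by
    intro v hv
    have h1 : C ⊆ (fun x : ℝ × ℝ => -x) ⁻¹' C := fun x hx => hCs x hx
    have h2 : K ⊆ closure ((fun x : ℝ × ℝ => -x) ⁻¹' C) := closure_mono h1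
    have h3 : (fun x : ℝ × ℝ => -x) ⁻¹' K
        = closure ((fun x : ℝ × ℝ => -x) ⁻¹' C) :=
      (Homeomorph.neg (ℝ × ℝ)).preimage_closure C
    have h4 : v ∈ (fun x : ℝ × ℝ => -x) ⁻¹' K := by rw [h3]; exact h2 hv
    exact h4
  have hKvol : ENNReal.ofReal (2 * Real.pi * R ^ 2) ≤ volume K :=
    le_trans hCv (measure_mono hCK)
  -- the interior of C contains 0
  have hCint : (interior C).Nonempty := by
    by_contra hne
    rw [Set.not_nonempty_iff_eq_empty] at hne
    have hsubfr : C ⊆ frontier C := by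
      intro x hx
      rw [frontier, hne, Set.diff_empty]
      exact subset_closure hx
    have h0 : volume C = 0 :=
      le_antisymm (le_trans (measure_mono hsubfr)
        (le_of_eq (hCc.addHaar_frontier volume))) zero_le
    rw [h0] at hCv
    exact (ENNReal.ofReal_pos.2 hvolpos).ne' (le_antisymm hCv zero_le)
  have h0int : (0 : ℝ × ℝ) ∈ interior C := by
    obtain ⟨x, hx⟩ := hCint
    have hopen : IsOpen ((fun y : ℝ × ℝ => -y) '' interior C) :=
      (Homeomorph.neg (ℝ × ℝ)).isOpenMap _ isOpen_interior
    have hsubC : ((fun y : ℝ × ℝ => -y) '' interior C) ⊆ C := by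
      rintro y ⟨u, hu, rfl⟩
      exact hCs u (interior_subset hu)
    have hnx : -x ∈ interior C := interior_maximal hsubC hopen ⟨x, hx, rfl⟩
    have := (hCc.interior) hx hnx (by norm_num : (0:ℝ) ≤ 1/2)
      (by norm_num : (0:ℝ) ≤ 1/2) (by norm_num)
    simpa using this
  obtain ⟨ε, hεpos, hεball⟩ := Metric.isOpen_iff.1 isOpen_interior 0 h0int
  set r₀ : ℝ := ε / 2 with hr₀_def
  have hr₀ : 0 < r₀ := by positivity
  have hr₀sub : ∀ v : ℝ × ℝ, v.1 ^ 2 + v.2 ^ 2 ≤ r₀ ^ 2 → v ∈ K := by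
    intro v hv
    apply hCK; apply interior_subset; apply hεball
    rw [Metric.mem_ball, dist_zero_right, Prod.norm_def]
    have h1 : |v.1| ≤ r₀ := by
      nlinarith [sq_abs v.1, sq_abs v.2, abs_nonneg v.1, abs_nonneg v.2, sq_nonneg v.2]
    have h2 : |v.2| ≤ r₀ := by
      nlinarith [sq_abs v.1, sq_abs v.2, abs_nonneg v.1, abs_nonneg v.2, sq_nonneg v.1]
    have : max ‖v.1‖ ‖v.2‖ ≤ r₀ := by
      rw [Real.norm_eq_abs, Real.norm_eq_abs]
      exact max_le h1 h2
    calc max ‖v.1‖ ‖v.2‖ ≤ r₀ := this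
      _ < ε := by rw [hr₀_def]; linarith
  obtain ⟨D, hD⟩ := hKcompact.isBounded.subset_closedBall 0
  have hD0 : 0 < D + 1 := by
    have := hD (hr₀sub (r₀, 0) (by norm_num))
    rw [Metric.mem_closedBall, dist_zero_right] at this
    have := norm_nonneg ((r₀, 0) : ℝ × ℝ)
    linarith
  have hDK : ∀ k ∈ K, |k.1| ≤ D + 1 ∧ |k.2| ≤ D + 1 := by
    intro k hk
    have := hD hk
    rw [Metric.mem_closedBall, dist_zero_right] at this
    constructor
    · calc |k.1| = ‖k.1‖ := (Real.norm_eq_abs _).symm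
        _ ≤ ‖k‖ := norm_fst_le k
        _ ≤ D := this
        _ ≤ D + 1 := by linarith
    · calc |k.2| = ‖k.2‖ := (Real.norm_eq_abs _).symm
        _ ≤ ‖k‖ := norm_snd_le k
        _ ≤ D := this
        _ ≤ D + 1 := by linarith
  set G : Set ((Fin 2 → Fin 2 → ℝ) × ℝ) :=
    {q | Matrix.det q.1 = 1 ∧ r₀ ≤ q.2 ∧
      ∀ v : ℝ × ℝ, v.1 ^ 2 + v.2 ^ 2 ≤ q.2 ^ 2 → v ∈ matAct q.1 '' K} with hG_def
  have hG1 : ((1 : Matrix (Fin 2) (Fin 2) ℝ), r₀) ∈ G := by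
    refine ⟨Matrix.det_one, le_refl _, ?_⟩
    intro v hv
    exact ⟨v, hr₀sub v hv, matAct_one v⟩
  -- G is closed
  have hce : ∀ i j : Fin 2, Continuous fun q : (Fin 2 → Fin 2 → ℝ) × ℝ => q.1 i j :=
    fun i j => (continuous_apply j).comp ((continuous_apply i).comp continuous_fst)
  have hGeq : G = {q : (Fin 2 → Fin 2 → ℝ) × ℝ |
        q.1 0 0 * q.1 1 1 - q.1 0 1 * q.1 1 0 = 1} ∩
      ({q | r₀ ≤ q.2} ∩
      ⋂ (w : ℝ × ℝ) (_ : w.1 ^ 2 + w.2 ^ 2 ≤ 1),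
        {q | matAct (matInv q.1) (q.2 * w.1, q.2 * w.2) ∈ K}) := by
    ext q
    simp only [hG_def, Set.mem_setOf_eq, Set.mem_inter_iff, Set.mem_iInter,
      ← Matrix.det_fin_two]
    constructor
    · rintro ⟨hdet, hr, himg⟩
      refine ⟨(Matrix.det_fin_two _).symm.trans hdet, hr, ?_⟩
      intro w hw
      have hq2 : 0 < q.2 := lt_of_lt_of_le hr₀ hr
      have hmem : ((q.2 * w.1, q.2 * w.2) : ℝ × ℝ).1 ^ 2 +
          ((q.2 * w.1, q.2 * w.2) : ℝ × ℝ).2 ^ 2 ≤ q.2 ^ 2 := by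
        simp only
        nlinarith [hq2, hw]
      obtain ⟨k, hk, he⟩ := himg _ hmem
      rw [← he, matInv_act q.1 hdet]
      exact hk
    · rintro ⟨hdet0, hr, hw⟩
      have hdet : Matrix.det q.1 = 1 := (Matrix.det_fin_two _).trans hdet0
      refine ⟨hdet, hr, ?_⟩
      intro v hv
      have hq2 : 0 < q.2 := lt_of_lt_of_le hr₀ hr
      have h1 : ((v.1 / q.2 : ℝ), (v.2 / q.2 : ℝ)).1 ^ 2 +
          ((v.1 / q.2 : ℝ), (v.2 / q.2 : ℝ)).2 ^ 2 ≤ 1 := by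
        simp only [div_pow, ← add_div]
        rw [div_le_one (by positivity)]
        exact hv
      have h2 := hw _ h1
      simp only [mul_div_cancel₀ _ (ne_of_gt hq2)] at h2
      exact ⟨_, h2, act_matInv q.1 hdet v⟩
  have hGclosed : IsClosed G := by
    rw [hGeq]
    apply IsClosed.inter
    · exact isClosed_eq (((hce 0 0).mul (hce 1 1)).sub ((hce 0 1).mul (hce 1 0)))
        continuous_const
    apply IsClosed.inter
    · exact isClosed_le continuous_const continuous_snd
    · apply isClosed_iInter
      intro w
      apply isClosed_iInter
      intro _
      apply IsClosed.preimage _ hKclosed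
      unfold matAct matInv
      simp only [Matrix.cons_val', Matrix.cons_val_zero, Matrix.cons_val_one,
        Matrix.head_cons, Matrix.empty_val', Matrix.cons_val_fin_one, Matrix.head_fin_const,
        Matrix.of_apply]
      apply Continuous.prodMk
      · exact ((hce 1 1).mul (continuous_snd.mul continuous_const)).add
          (((hce 0 1).neg).mul (continuous_snd.mul continuous_const))
      · exact (((hce 1 0).neg).mul (continuous_snd.mul continuous_const)).add
          ((hce 0 0).mul (continuous_snd.mul continuous_const))
  -- G is bounded
  set M₁ : ℝ := (D + 1) / r₀ with hM₁_def
  have hM₁pos : 0 < M₁ := by positivity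
  have hGbound : ∀ q ∈ G, (∀ i j : Fin 2, |q.1 i j| ≤ M₁) ∧ |q.2| ≤ 2 * M₁ * (D + 1) := by
    rintro q ⟨hdet, hr, himg⟩
    have hq2 : 0 < q.2 := lt_of_lt_of_le hr₀ hr
    obtain ⟨k₁, hk₁, he₁⟩ := himg (q.2, 0) (by norm_num)
    obtain ⟨k₂, hk₂, he₂⟩ := himg (0, q.2) (by norm_num)
    have hke₁ : k₁ = (q.1 1 1 * q.2, -(q.1 1 0) * q.2) := by
      have := congrArg (matAct (matInv q.1)) he₁
      rw [matInv_act q.1 hdet] at this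
      rw [this]
      simp [matAct, matInv, Prod.ext_iff]
    have hke₂ : k₂ = (-(q.1 0 1) * q.2, q.1 0 0 * q.2) := by
      have := congrArg (matAct (matInv q.1)) he₂
      rw [matInv_act q.1 hdet] at this
      rw [this]
      simp [matAct, matInv, Prod.ext_iff]
    have hb₁ := hDK k₁ hk₁
    have hb₂ := hDK k₂ hk₂
    rw [hke₁] at hb₁
    rw [hke₂] at hb₂
    simp only [abs_mul, abs_neg, abs_of_pos hq2] at hb₁ hb₂
    have hent : ∀ i j : Fin 2, |q.1 i j| ≤ M₁ := by
      intro i j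
      have hgen : ∀ c : ℝ, |c| * q.2 ≤ D + 1 → |c| ≤ M₁ := by
        intro c hc
        rw [hM₁_def, le_div_iff₀ hr₀]
        calc |c| * r₀ ≤ |c| * q.2 := by
              apply mul_le_mul_of_nonneg_left hr (abs_nonneg c)
          _ ≤ D + 1 := hc
      fin_cases i <;> fin_cases j
      · exact hgen _ hb₂.2
      · exact hgen _ hb₂.1
      · exact hgen _ hb₁.2
      · exact hgen _ hb₁.1
    refine ⟨hent, ?_⟩
    -- bound on q.2 via the first coordinate of he₁
    have he₁1 : q.1 0 0 * k₁.1 + q.1 0 1 * k₁.2 = q.2 := by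
      have := congrArg Prod.fst he₁
      simpa [matAct] using this
    have hk₁b := hDK k₁ hk₁
    rw [abs_of_pos hq2, ← he₁1]
    calc q.1 0 0 * k₁.1 + q.1 0 1 * k₁.2
        ≤ |q.1 0 0 * k₁.1 + q.1 0 1 * k₁.2| := le_abs_self _
      _ ≤ |q.1 0 0| * |k₁.1| + |q.1 0 1| * |k₁.2| := by
          rw [← abs_mul, ← abs_mul]
          exact abs_add_le _ _
      _ ≤ M₁ * (D + 1) + M₁ * (D + 1) := by
          apply add_le_add <;>
            exact mul_le_mul (hent _ _) (by tauto) (abs_nonneg _) hM₁pos.le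
      _ = 2 * M₁ * (D + 1) := by ring
  have hGsub : G ⊆ Metric.closedBall 0 (M₁ + 2 * M₁ * (D + 1)) := by
    intro q hq
    obtain ⟨h1, h2⟩ := hGbound q hq
    rw [Metric.mem_closedBall, dist_zero_right, Prod.norm_def]
    have hM2 : (0:ℝ) ≤ 2 * M₁ * (D + 1) := by positivity
    apply max_le
    · calc ‖q.1‖ ≤ M₁ := by
            apply (pi_norm_le_iff_of_nonneg hM₁pos.le).2
            intro i
            apply (pi_norm_le_iff_of_nonneg hM₁pos.le).2
            intro j
            rw [Real.norm_eq_abs]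
            exact h1 i j
        _ ≤ M₁ + 2 * M₁ * (D + 1) := by linarith
    · rw [Real.norm_eq_abs]
      linarith [h2, hM₁pos]
  have hGcompact : IsCompact G :=
    (isCompact_closedBall _ _).of_isClosed_subset hGclosed hGsub
  obtain ⟨qs, hqsG, hqsmax⟩ := hGcompact.exists_isMaxOn ⟨_, hG1⟩
    continuous_snd.continuousOn
  set As : Matrix (Fin 2) (Fin 2) ℝ := Matrix.of qs.1 with hAs_def
  set rs : ℝ := qs.2 with hrs_def
  have hdetAs : As.det = 1 := hqsG.1
  have hrsr₀ : r₀ ≤ rs := hqsG.2.1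
  have hrs0 : 0 < rs := lt_of_lt_of_le hr₀ hrsr₀
  have hdk : ∀ v : ℝ × ℝ, v.1 ^ 2 + v.2 ^ 2 ≤ rs ^ 2 → v ∈ matAct As '' K := hqsG.2.2
  set V : Set (ℝ × ℝ) := matAct As '' K with hV_def
  have hVconv : Convex ℝ V := hKconv.linear_image (matL As)
  have hVsym : ∀ v ∈ V, -v ∈ V := image_sym As K hKsym
  -- no vector of V is longer than √2 rs
  have hsub : ∀ v ∈ V, v.1 ^ 2 + v.2 ^ 2 ≤ 2 * rs ^ 2 := by
    by_contra hcon
    push_neg at hcon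
    obtain ⟨p, hpV, hp2⟩ := hcon
    set d : ℝ := Real.sqrt (p.1 ^ 2 + p.2 ^ 2) with hd_def
    have hpnn : (0:ℝ) ≤ p.1 ^ 2 + p.2 ^ 2 := by positivity
    have hd2 : d ^ 2 = p.1 ^ 2 + p.2 ^ 2 := Real.sq_sqrt hpnn
    have hd0 : 0 < d := Real.sqrt_pos.2 (by nlinarith [hrs0])
    have hdgt : 2 * rs ^ 2 < d ^ 2 := by rw [hd2]; exact hp2
    set Q : Matrix (Fin 2) (Fin 2) ℝ := !![p.1 / d, p.2 / d; -(p.2 / d), p.1 / d] with hQ_def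
    have hQdet : Q.det = 1 := by
      rw [hQ_def, Matrix.det_fin_two_of]
      field_simp
      linarith [hd2]
    set K2 : Set (ℝ × ℝ) := matAct Q '' V with hK2_def
    have hK2conv : Convex ℝ K2 := hVconv.linear_image (matL Q)
    have hK2sym : ∀ v ∈ K2, -v ∈ K2 := image_sym Q V hVsym
    have hK2ball : ∀ v : ℝ × ℝ, v.1 ^ 2 + v.2 ^ 2 ≤ rs ^ 2 → v ∈ K2 := by
      intro v hv
      set u : ℝ × ℝ := matAct (matInv Q) v with hu_def
      have hu_comp : u = ((p.1 / d) * v.1 + -(p.2 / d) * v.2,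
          -(-(p.2 / d)) * v.1 + (p.1 / d) * v.2) := by
        rw [hu_def, hQ_def, matInv_mk, matAct_mk]
      have hu2 : u.1 ^ 2 + u.2 ^ 2 = v.1 ^ 2 + v.2 ^ 2 := by
        rw [hu_comp]
        have expand : ((p.1 / d) * v.1 + -(p.2 / d) * v.2) ^ 2
            + (-(-(p.2 / d)) * v.1 + (p.1 / d) * v.2) ^ 2
            = ((p.1 ^ 2 + p.2 ^ 2) / d ^ 2) * (v.1 ^ 2 + v.2 ^ 2) := by
          field_simp
          ring
        rw [expand, ← hd2, div_self (by positivity : (d:ℝ) ^ 2 ≠ 0), one_mul]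
      exact ⟨u, hdk u (by rw [hu2]; exact hv), act_matInv Q hQdet v⟩
    have hK2p : ((d:ℝ), (0:ℝ)) ∈ K2 := by
      refine ⟨p, hpV, ?_⟩
      rw [hQ_def, matAct_mk, Prod.ext_iff]
      constructor
      · simp only
        rw [div_mul_eq_mul_div, div_mul_eq_mul_div, ← add_div,
          div_eq_iff (ne_of_gt hd0)]
        linear_combination (-1) * hd2
      · simp only
        field_simp
        ring
    obtain ⟨T, ρ, hTdet, hrρ, himg⟩ := improve hrs0 hd0 hdgt hK2conv hK2sym hK2ball hK2p
    have hmem : ((Matrix.of.symm (T * (Q * As)) : Fin 2 → Fin 2 → ℝ), ρ) ∈ G := by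
      refine ⟨?_, le_of_lt (lt_of_le_of_lt hrsr₀ hrρ), ?_⟩
      · show Matrix.det (T * (Q * As)) = 1
        rw [Matrix.det_mul, Matrix.det_mul, hTdet, hQdet, hdetAs]
        norm_num
      · intro v hv
        have hmem2 := himg v hv
        show v ∈ matAct (T * (Q * As)) '' K
        rw [image_mul, image_mul]
        exact hmem2
    have := hqsmax hmem
    simp only at this
    exact absurd this (not_le.2 hrρ)
  -- volume comparison gives R ≤ rs
  have hvolV : volume V = volume K := vol_image As hdetAs K
  have hVDk : V ⊆ {v : ℝ × ℝ | v.1 ^ 2 + v.2 ^ 2 ≤ 2 * rs ^ 2} := fun v hv => hsub v hv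
  have hvol2 : ENNReal.ofReal (2 * Real.pi * R ^ 2)
      ≤ ENNReal.ofReal (Real.pi * (2 * rs ^ 2)) := by
    calc ENNReal.ofReal (2 * Real.pi * R ^ 2) ≤ volume K := hKvol
      _ = volume V := hvolV.symm
      _ ≤ volume {v : ℝ × ℝ | v.1 ^ 2 + v.2 ^ 2 ≤ 2 * rs ^ 2} := measure_mono hVDk
      _ = ENNReal.ofReal (Real.pi * (2 * rs ^ 2)) := vol_disk _ (by positivity)
  have hRrs : R ≤ rs := by
    have h1 := (ENNReal.ofReal_le_ofReal_iff (by positivity)).1 hvol2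
    have h2 : R ^ 2 ≤ rs ^ 2 := by nlinarith [hπ]
    by_contra hgt
    push_neg at hgt
    exact absurd (pow_lt_pow_left₀ hgt hrs0.le (by norm_num)) (not_lt.2 h2)
  have habs : ∀ q : ℝ × ℝ, q.1 ^ 2 + q.2 ^ 2 ≤ R ^ 2 → |q.1| ≤ R ∧ |q.2| ≤ R := by
    intro q hq
    constructor <;>
      nlinarith [sq_abs q.1, sq_abs q.2, abs_nonneg q.1, abs_nonneg q.2, hR]
  -- every point of the R-disk is interior to V
  have hfinal : ∀ q : ℝ × ℝ, q.1 ^ 2 + q.2 ^ 2 ≤ R ^ 2 → q ∈ interior V := by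
    rcases lt_or_eq_of_le hRrs with hlt | heq
    · intro q hq
      set e : ℝ := min R ((rs ^ 2 - R ^ 2) / (6 * R)) with he_def
      have hrs2R : 0 < rs ^ 2 - R ^ 2 := by nlinarith
      have hepos : 0 < e := lt_min hR (by positivity)
      rw [mem_interior]
      refine ⟨Metric.ball q e, ?_, Metric.isOpen_ball, Metric.mem_ball_self hepos⟩
      intro v hv
      apply hdk v
      rw [Metric.mem_ball, Prod.dist_eq] at hv
      obtain ⟨hq1, hq2⟩ := habs q hq
      have h1 : |v.1 - q.1| ≤ e := by
        rw [← Real.dist_eq]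
        exact le_of_lt (lt_of_le_of_lt (le_max_left _ _) hv)
      have h2 : |v.2 - q.2| ≤ e := by
        rw [← Real.dist_eq]
        exact le_of_lt (lt_of_le_of_lt (le_max_right _ _) hv)
      have he6 : 6 * e * R ≤ rs ^ 2 - R ^ 2 := by
        have hmr : e ≤ (rs ^ 2 - R ^ 2) / (6 * R) := min_le_right _ _
        calc 6 * e * R = e * (6 * R) := by ring
          _ ≤ ((rs ^ 2 - R ^ 2) / (6 * R)) * (6 * R) :=
              mul_le_mul_of_nonneg_right hmr (by positivity)
          _ = rs ^ 2 - R ^ 2 := by field_simp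
      exact sq_est hR hq1 hq2 h1 h2 hepos.le (min_le_left _ _) hq (by linarith)
    · -- equality case `R = rs`
      have hsubR : V ⊆ {v : ℝ × ℝ | v.1 ^ 2 + v.2 ^ 2 ≤ 2 * R ^ 2} := by
        intro v hv
        have := hsub v hv
        rw [← heq] at this
        exact this
      have hvolVeq : volume V = ENNReal.ofReal (2 * Real.pi * R ^ 2) := by
        apply le_antisymm
        · calc volume V ≤ volume {v : ℝ × ℝ | v.1 ^ 2 + v.2 ^ 2 ≤ 2 * R ^ 2} :=
                measure_mono hsubR
            _ = ENNReal.ofReal (Real.pi * (2 * R ^ 2)) := vol_disk _ (by positivity)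
            _ = ENNReal.ofReal (2 * Real.pi * R ^ 2) := by ring_nf
        · rw [hvolV]
          exact hKvol
      have hVcompact : IsCompact V := hKcompact.image (cont_matAct As)
      have hfull : ∀ w : ℝ × ℝ, w.1 ^ 2 + w.2 ^ 2 < 2 * R ^ 2 → w ∈ V := by
        intro w hw
        by_contra hwV
        obtain ⟨δ1, hδ1, hb1⟩ :=
          Metric.isOpen_iff.1 hVcompact.isClosed.isOpen_compl w hwV
        have hO2 : IsOpen {v : ℝ × ℝ | v.1 ^ 2 + v.2 ^ 2 < 2 * R ^ 2} := by
          apply isOpen_lt _ continuous_const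
          fun_prop
        obtain ⟨δ2, hδ2, hb2⟩ := Metric.isOpen_iff.1 hO2 w hw
        set δ : ℝ := min δ1 δ2 with hδ_def
        have hδpos : 0 < δ := lt_min hδ1 hδ2
        have hdisj : Disjoint V (Metric.ball w δ) := by
          rw [Set.disjoint_right]
          intro x hx
          exact hb1 (Metric.ball_subset_ball (min_le_left _ _) hx)
        have hsubU : V ∪ Metric.ball w δ ⊆ {v : ℝ × ℝ | v.1 ^ 2 + v.2 ^ 2 ≤ 2 * R ^ 2} := by
          apply Set.union_subset hsubR
          intro x hx
          have hlt : x ∈ {v : ℝ × ℝ | v.1 ^ 2 + v.2 ^ 2 < 2 * R ^ 2} :=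
            hb2 (Metric.ball_subset_ball (min_le_right _ _) hx)
          rw [Set.mem_setOf_eq] at hlt
          exact le_of_lt hlt
        have hvol3 : volume V + volume (Metric.ball w δ)
            ≤ ENNReal.ofReal (2 * Real.pi * R ^ 2) := by
          rw [← measure_union hdisj measurableSet_ball]
          calc volume (V ∪ Metric.ball w δ)
              ≤ volume {v : ℝ × ℝ | v.1 ^ 2 + v.2 ^ 2 ≤ 2 * R ^ 2} := measure_mono hsubU
            _ = ENNReal.ofReal (Real.pi * (2 * R ^ 2)) := vol_disk _ (by positivity)
            _ = ENNReal.ofReal (2 * Real.pi * R ^ 2) := by ring_nf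
        rw [hvolVeq] at hvol3
        have hzero : volume (Metric.ball w δ) ≤ 0 := by
          apply ENNReal.le_of_add_le_add_left ENNReal.ofReal_ne_top
          rw [add_zero]
          exact hvol3
        have hpos : 0 < volume (Metric.ball w δ) := Metric.measure_ball_pos volume w hδpos
        exact absurd (le_antisymm hzero zero_le) (ne_of_gt hpos)
      intro q hq
      rw [mem_interior]
      refine ⟨Metric.ball q (R / 7), ?_, Metric.isOpen_ball,
        Metric.mem_ball_self (by positivity)⟩
      intro v hv
      apply hfull
      rw [Metric.mem_ball, Prod.dist_eq] at hv
      obtain ⟨hq1, hq2⟩ := habs q hq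
      have h1 : |v.1 - q.1| ≤ R / 7 := by
        rw [← Real.dist_eq]
        exact le_of_lt (lt_of_le_of_lt (le_max_left _ _) hv)
      have h2 : |v.2 - q.2| ≤ R / 7 := by
        rw [← Real.dist_eq]
        exact le_of_lt (lt_of_le_of_lt (le_max_right _ _) hv)
      have := sq_est hR hq1 hq2 h1 h2 (by positivity) (by linarith)
        hq (le_refl (R ^ 2 + 6 * (R / 7) * R))
      nlinarith [this, hR]
  -- interior of V is inside the image of the interior of C
  have hICsub : interior K ⊆ interior C := by
    intro u hu
    obtain ⟨δ, hδ, hδsub⟩ := Metric.isOpen_iff.1 isOpen_interior u hu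
    set c : ℝ := δ / (2 * (‖u‖ + 1)) with hc_def
    have hcpos : 0 < c := by positivity
    have hz : (1 + c) • u ∈ K := by
      apply interior_subset
      apply hδsub
      rw [Metric.mem_ball]
      have hdist : dist ((1 + c) • u) u = c * ‖u‖ := by
        rw [dist_eq_norm, show (1 + c) • u - u = c • u by rw [add_smul, one_smul]; abel,
          norm_smul, Real.norm_eq_abs, abs_of_pos hcpos]
      rw [hdist]
      calc c * ‖u‖ ≤ c * (‖u‖ + 1) := by nlinarith [norm_nonneg u, hcpos]
        _ = δ / 2 := by rw [hc_def]; field_simp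
        _ < δ := by linarith
    have hcomb := hCc.combo_interior_closure_mem_interior h0int hz
      (a := c / (1 + c)) (b := 1 / (1 + c)) (by positivity) (by positivity)
      (by field_simp <;> ring)
    have heq2 : (c / (1 + c)) • (0 : ℝ × ℝ) + (1 / (1 + c)) • ((1 + c) • u) = u := by
      rw [smul_zero, zero_add, smul_smul,
        show (1 / (1 + c)) * (1 + c) = 1 by field_simp, one_smul]
    rwa [heq2] at hcomb
  refine ⟨As, hdetAs, ?_⟩
  intro v hv
  have hvi := hfinal v hv
  have h1 : matAct (matInv As) v ∈ matAct As ⁻¹' interior V := by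
    rw [Set.mem_preimage, act_matInv As hdetAs]
    exact hvi
  have hopen : IsOpen (matAct As ⁻¹' interior V) := isOpen_interior.preimage (cont_matAct As)
  have hsubK : matAct As ⁻¹' interior V ⊆ K := by
    intro y hy
    obtain ⟨k, hk, he⟩ := (interior_subset hy : matAct As y ∈ V)
    have h3 := congrArg (matAct (matInv As)) he
    rw [matInv_act As hdetAs, matInv_act As hdetAs] at h3
    rwa [← h3]
  have h4 : matAct (matInv As) v ∈ interior C :=
    hICsub (interior_maximal hsubK hopen h1)
  exact ⟨matAct (matInv As) v, interior_subset h4, act_matInv As hdetAs v⟩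

end MkAux

/-- The Minkowski constant `μ(Z)`: one fourth of the supremum of the areas of bounded,
convex, origin-symmetric sets disjoint from `Z`. -/
noncomputable def minkowskiConst (Z : Set (ℝ × ℝ)) : ENNReal :=
  (1 / 4) * sSup (MeasureTheory.volume ''
    {C : Set (ℝ × ℝ) | Convex ℝ C ∧ Bornology.IsBounded C ∧ (∀ x ∈ C, -x ∈ C) ∧
      Disjoint C Z})

/-- If `Z ⊂ ℝ² \ {0}` is such that for some `R > 0` every `SL₂(ℝ)`-image of `Z` contains
a vector of Euclidean length at most `R`, then `μ(Z) ≤ (π/2)R²`; indeed every bounded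
convex origin-symmetric `C` of area at least `2πR²` meets `Z`. -/
theorem stmt8 (Z : Set (ℝ × ℝ)) (hZ0 : (0 : ℝ × ℝ) ∉ Z) (R : ℝ) (hR : 0 < R)
    (hshort : ∀ A : Matrix.SpecialLinearGroup (Fin 2) ℝ,
      ∃ z ∈ Z, Real.sqrt ((matAct (A : Matrix (Fin 2) (Fin 2) ℝ) z).1 ^ 2 +
        (matAct (A : Matrix (Fin 2) (Fin 2) ℝ) z).2 ^ 2) ≤ R) :
    minkowskiConst Z ≤ ENNReal.ofReal (Real.pi / 2 * R ^ 2) ∧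
    ∀ C : Set (ℝ × ℝ), Convex ℝ C → Bornology.IsBounded C → (∀ x ∈ C, -x ∈ C) →
      ENNReal.ofReal (2 * Real.pi * R ^ 2) ≤ MeasureTheory.volume C →
      ∃ z ∈ Z, z ∈ C := by
  have part2 : ∀ C : Set (ℝ × ℝ), Convex ℝ C → Bornology.IsBounded C →
      (∀ x ∈ C, -x ∈ C) →
      ENNReal.ofReal (2 * Real.pi * R ^ 2) ≤ MeasureTheory.volume C →
      ∃ z ∈ Z, z ∈ C := by
    intro C hc hb hs hv
    obtain ⟨A, hdet, himg⟩ := MkAux.key R hR C hc hb hs hv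
    obtain ⟨z, hz, hlen⟩ := hshort ⟨A, hdet⟩
    have hzdk : (matAct A z).1 ^ 2 + (matAct A z).2 ^ 2 ≤ R ^ 2 := by
      have h0 : (0:ℝ) ≤ (matAct A z).1 ^ 2 + (matAct A z).2 ^ 2 := by positivity
      calc (matAct A z).1 ^ 2 + (matAct A z).2 ^ 2
          = Real.sqrt ((matAct A z).1 ^ 2 + (matAct A z).2 ^ 2) ^ 2 :=
            (Real.sq_sqrt h0).symm
        _ ≤ R ^ 2 := pow_le_pow_left₀ (Real.sqrt_nonneg _) hlen 2
    obtain ⟨c, hcC, he⟩ := himg _ hzdk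
    have heq := congrArg (matAct (MkAux.matInv A)) he
    rw [MkAux.matInv_act A hdet, MkAux.matInv_act A hdet] at heq
    exact ⟨z, hz, heq ▸ hcC⟩
  refine ⟨?_, part2⟩
  have hsup : sSup (MeasureTheory.volume ''
      {C : Set (ℝ × ℝ) | Convex ℝ C ∧ Bornology.IsBounded C ∧ (∀ x ∈ C, -x ∈ C) ∧
        Disjoint C Z}) ≤ ENNReal.ofReal (2 * Real.pi * R ^ 2) := by
    apply sSup_le
    rintro m ⟨C, ⟨hc, hb, hs, hdis⟩, rfl⟩
    by_contra hgt
    push_neg at hgt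
    obtain ⟨z, hz, hzC⟩ := part2 C hc hb hs (le_of_lt hgt)
    exact (Set.disjoint_left.1 hdis hzC) hz
  calc minkowskiConst Z
      ≤ (1 / 4) * ENNReal.ofReal (2 * Real.pi * R ^ 2) := by
        rw [minkowskiConst]
        exact mul_le_mul_right hsup _
    _ = ENNReal.ofReal (Real.pi / 2 * R ^ 2) := by
        rw [show (2 * Real.pi * R ^ 2 : ℝ) = 4 * (Real.pi / 2 * R ^ 2) by ring,
          ENNReal.ofReal_mul (by norm_num : (0:ℝ) ≤ 4), ← mul_assoc]
        norm_num
        rw [ENNReal.inv_mul_cancel (by norm_num) (by norm_num), one_mul]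
end

section
/- Let K be a totally real number field of degree D with real embeddings σ₁ = id, σ₂, ..., σ_D. Let c > 0 and m ∈ ℕ, m ≥ 1. Suppose p, q ∈ K with q > 0 are such that mp, mq are algebraic integers and |p| ≥ c|σᵢ(p)|, |q| ≥ c|σᵢ(q)| for all i. Then the naive height of p/q satisfies H(p/q) ≤ c₂ · max{|p|, q}^D for a constant c₂ depending only on c, m, and D (not on p, q). -/
open Polynomial

/-- The primitive integer minimal polynomial of an algebraic number. -/
noncomputable def intMinpoly (γ : ℂ) : Polynomial ℤ :=
  (IsLocalization.integerNormalization (nonZeroDivisors ℤ) (minpoly ℚ γ)).primPart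

/-- The naive height of an algebraic number: the maximal absolute value of the
coefficients of its minimal polynomial over `ℤ`. -/
noncomputable def naiveHeight (γ : ℂ) : ℝ :=
  ((intMinpoly γ).support.sup fun i => ((intMinpoly γ).coeff i).natAbs : ℕ)


noncomputable def mah (f : Polynomial ℂ) : ℝ :=
  ‖f.leadingCoeff‖ * ((f.roots).map (fun z => max 1 ‖z‖)).prod

lemma one_le_prod_max (t : Multiset ℂ) : (1:ℝ) ≤ ((t.map fun z => max 1 ‖z‖)).prod := by
  induction t using Multiset.induction with
  | empty => simp
  | cons a u ih =>
    rw [Multiset.map_cons, Multiset.prod_cons]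
    exact one_le_mul_of_one_le_of_one_le (le_max_left _ _) ih

lemma mah_nonneg (f : Polynomial ℂ) : 0 ≤ mah f :=
  mul_nonneg (norm_nonneg _) (le_trans zero_le_one (one_le_prod_max _))

lemma one_le_mah {f : Polynomial ℂ} (hf : 1 ≤ ‖f.leadingCoeff‖) : 1 ≤ mah f :=
  one_le_mul_of_one_le_of_one_le hf (one_le_prod_max _)

lemma mah_mul {f g : Polynomial ℂ} (hf : f ≠ 0) (hg : g ≠ 0) :
    mah (f * g) = mah f * mah g := by
  unfold mah
  rw [leadingCoeff_mul, norm_mul, roots_mul (mul_ne_zero hf hg), Multiset.map_add,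
    Multiset.prod_add]
  ring

lemma mah_linear (a b : ℂ) (ha : a ≠ 0) : mah (C a * X - C b) = max ‖a‖ ‖b‖ := by
  have h : C a * X - C b = C a * (X - C (b / a)) := by
    rw [mul_sub, ← C_mul, mul_div_cancel₀ _ ha]
  rw [mah, h, roots_C_mul _ ha, roots_X_sub_C, leadingCoeff_mul,
    (monic_X_sub_C (b/a)).leadingCoeff]
  simp only [norm_mul, norm_one, mul_one, Multiset.map_singleton, Multiset.prod_singleton,
    leadingCoeff_C]
  rw [norm_div, mul_max_of_nonneg _ _ (norm_nonneg a), mul_one,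
    mul_div_cancel₀ _ (norm_ne_zero_iff.mpr ha)]

lemma prod_norm_eq (t : Multiset ℂ) : (t.map fun z => ‖z‖).prod = ‖t.prod‖ := by
  induction t using Multiset.induction with
  | empty => simp
  | cons a s ih =>
    rw [Multiset.map_cons, Multiset.prod_cons, Multiset.prod_cons, norm_mul, ih]

lemma prod_norm_le_prod_max (t : Multiset ℂ) :
    (t.map fun z => ‖z‖).prod ≤ (t.map fun z => max 1 ‖z‖).prod := by
  induction t using Multiset.induction with
  | empty => simp
  | cons a u ih =>
    simp only [Multiset.map_cons, Multiset.prod_cons]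
    have hu : (0:ℝ) ≤ (u.map fun z => ‖z‖).prod :=
      Multiset.prod_nonneg (by
        intro x hx; obtain ⟨z, _, rfl⟩ := Multiset.mem_map.mp hx; exact norm_nonneg z)
    exact mul_le_mul (le_max_right _ _) ih hu (le_trans (norm_nonneg a) (le_max_right _ _))

lemma esymm_bound (s : Multiset ℂ) (j : ℕ) :
    ‖s.esymm j‖ ≤ (Multiset.card s).choose j * ((s.map fun z => max 1 ‖z‖)).prod := by
  rw [Multiset.esymm]
  refine le_trans (norm_multiset_sum_le _) ?_
  rw [Multiset.map_map]
  have this := Multiset.sum_le_card_nsmul ((s.powersetCard j).map fun t => ‖t.prod‖)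
    ((s.map fun z => max 1 ‖z‖).prod) ?_
  · have hc : Multiset.card (Multiset.map (fun t => ‖t.prod‖) (s.powersetCard j))
        = (Multiset.card s).choose j := by
      rw [Multiset.card_map, Multiset.card_powersetCard]
    rw [hc, nsmul_eq_mul] at this
    exact le_trans (le_of_eq (by rfl)) this
  · intro x hx
    obtain ⟨t, ht, rfl⟩ := Multiset.mem_map.mp hx
    have hts : t ≤ s := (Multiset.mem_powersetCard.mp ht).1
    rw [← prod_norm_eq]
    refine le_trans (prod_norm_le_prod_max t) ?_
    obtain ⟨u, rfl⟩ := Multiset.le_iff_exists_add.mp hts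
    rw [Multiset.map_add, Multiset.prod_add]
    exact le_mul_of_one_le_right (le_trans zero_le_one (one_le_prod_max t))
      (one_le_prod_max u)

lemma choose_le_two_pow' {n j : ℕ} : n.choose j ≤ 2 ^ n := by
  by_cases h : j ≤ n
  · calc n.choose j ≤ ∑ i ∈ Finset.range (n+1), n.choose i :=
        Finset.single_le_sum (fun i _ => Nat.zero_le _)
          (Finset.mem_range.mpr (Nat.lt_succ_of_le h))
    _ = 2 ^ n := Nat.sum_range_choose n
  · rw [Nat.choose_eq_zero_of_lt (lt_of_not_ge h)]; exact Nat.zero_le _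

lemma mah_coeff_le {f : Polynomial ℂ} (hf : f ≠ 0) (k : ℕ) :
    ‖f.coeff k‖ ≤ 2 ^ f.natDegree * mah f := by
  by_cases hk : k ≤ f.natDegree
  · have hsplit : f.Splits := IsAlgClosed.splits f
    rw [Polynomial.coeff_eq_esymm_roots_of_splits hsplit hk]
    have hcard : Multiset.card f.roots = f.natDegree := (splits_iff_card_roots).mp hsplit
    rw [norm_mul, norm_mul, norm_pow, norm_neg, norm_one, one_pow, mul_one]
    calc ‖f.leadingCoeff‖ * ‖f.roots.esymm (f.natDegree - k)‖
        ≤ ‖f.leadingCoeff‖ * ((Multiset.card f.roots).choose (f.natDegree - k) *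
            ((f.roots.map fun z => max 1 ‖z‖)).prod) :=
          mul_le_mul_of_nonneg_left (esymm_bound _ _) (norm_nonneg _)
      _ ≤ 2 ^ f.natDegree * mah f := by
          rw [mah, hcard]
          have h2 : ((f.natDegree.choose (f.natDegree - k) : ℝ)) ≤ 2 ^ f.natDegree := by
            exact_mod_cast Nat.cast_le.mpr (choose_le_two_pow' (n := f.natDegree))
          calc ‖f.leadingCoeff‖ * ((f.natDegree.choose (f.natDegree - k)) *
                ((f.roots.map fun z => max 1 ‖z‖)).prod)
              = (f.natDegree.choose (f.natDegree - k) : ℝ) *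
                (‖f.leadingCoeff‖ * ((f.roots.map fun z => max 1 ‖z‖)).prod) := by ring
            _ ≤ 2 ^ f.natDegree * (‖f.leadingCoeff‖ * ((f.roots.map fun z => max 1 ‖z‖)).prod) := by
                apply mul_le_mul_of_nonneg_right h2
                exact mul_nonneg (norm_nonneg _) (le_trans zero_le_one (one_le_prod_max _))
  · rw [Polynomial.coeff_eq_zero_of_natDegree_lt (lt_of_not_ge hk), norm_zero]
    exact mul_nonneg (by positivity) (mah_nonneg f)


lemma exists_normPoly (K : Type*) [Field K] [NumberField K]
    (B Γ : NumberField.RingOfIntegers K) :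
    ∃ F : Polynomial ℤ, F.map (Int.castRingHom ℂ)
      = ∏ τ : K →ₐ[ℚ] ℂ, (C (τ (algebraMap (NumberField.RingOfIntegers K) K B)) * X
          - C (τ (algebraMap (NumberField.RingOfIntegers K) K Γ))) := by
  classical
  let b0 := NumberField.RingOfIntegers.basis K
  let Mβ := Algebra.leftMulMatrix b0 B
  let Mγ := Algebra.leftMulMatrix b0 Γ
  let N : Matrix _ _ (Polynomial ℤ) := Matrix.of fun i j => X * C (Mβ i j) - C (Mγ i j)
  refine ⟨N.det, ?_⟩
  apply Polynomial.eq_of_infinite_eval_eq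
  apply Set.infinite_of_injective_forall_mem (f := fun n : ℤ => (n : ℂ))
  case hi => exact Int.cast_injective
  intro n
  show Polynomial.eval ((n : ℂ)) ((N.det).map (Int.castRingHom ℂ)) = _
  have h1 : Polynomial.eval ((n : ℂ)) ((N.det).map (Int.castRingHom ℂ))
      = (Int.castRingHom ℂ) (N.det.eval n) := by
    rw [show ((n : ℂ)) = (Int.castRingHom ℂ) n from rfl, Polynomial.eval_map,
      Polynomial.eval₂_hom]
  have h2 : N.det.eval n = Algebra.norm ℤ (n • B - Γ) := by
    have : N.det.eval n = (Polynomial.evalRingHom n) N.det := rfl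
    rw [this, RingHom.map_det]
    rw [Algebra.norm_eq_matrix_det b0]
    congr 1
    ext i j
    simp only [RingHom.mapMatrix_apply, Matrix.map_apply, N, Matrix.of_apply, map_sub,
      map_zsmul, coe_evalRingHom,
      Polynomial.eval_sub, Polynomial.eval_mul, Polynomial.eval_X, Polynomial.eval_C,
      Matrix.sub_apply, Matrix.smul_apply, smul_eq_mul, Mβ, Mγ]
  have h3 : ((Algebra.norm ℤ (n • B - Γ) : ℤ) : ℂ)
      = algebraMap ℚ ℂ (Algebra.norm ℚ (algebraMap (NumberField.RingOfIntegers K) K (n • B - Γ))) := by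
    rw [← Algebra.coe_norm_int]
    norm_cast
  rw [h1, h2]
  rw [show (Int.castRingHom ℂ) (Algebra.norm ℤ (n • B - Γ))
    = ((Algebra.norm ℤ (n • B - Γ) : ℤ) : ℂ) from rfl, h3,
    Algebra.norm_eq_prod_embeddings]
  rw [Polynomial.eval_prod]
  apply Finset.prod_congr rfl
  intro τ _
  rw [Polynomial.eval_sub, Polynomial.eval_mul, Polynomial.eval_X, Polynomial.eval_C,
    Polynomial.eval_C]
  simp only [map_sub, map_zsmul, zsmul_eq_mul, map_mul, map_intCast]
  push_cast
  ring


lemma intMinpoly_map_eq {γ : ℂ} (hγ : IsIntegral ℚ γ) :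
    ∃ u : ℚ, u ≠ 0 ∧ (intMinpoly γ).map (algebraMap ℤ ℚ) = C u * minpoly ℚ γ := by
  set μ := minpoly ℚ γ with hμ
  have hμ0 : μ ≠ 0 := minpoly.ne_zero hγ
  set P := IsLocalization.integerNormalization (nonZeroDivisors ℤ) μ with hP
  obtain ⟨b, hb⟩ := IsLocalization.integerNormalization_map_to_map (nonZeroDivisors ℤ) μ
  have hb0 : ((b : ℤ) : ℚ) ≠ 0 := Int.cast_ne_zero.mpr (nonZeroDivisors.coe_ne_zero b)
  have hsmul : ((b : ℤ)) • μ = C ((b : ℤ) : ℚ) * μ := by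
    rw [zsmul_eq_mul, ← Polynomial.C_eq_intCast]
  have hb2 : P.map (algebraMap ℤ ℚ) = ((b : ℤ)) • μ := hb
  have hP0 : P ≠ 0 := by
    intro h
    rw [h, Polynomial.map_zero] at hb2
    have : μ = 0 := by
      have := hb2.symm
      rwa [smul_eq_zero_iff_right (by exact_mod_cast nonZeroDivisors.coe_ne_zero b)] at this
    exact hμ0 this
  have hcont : (P.content : ℚ) ≠ 0 := by
    exact_mod_cast Int.cast_ne_zero.mpr (fun h => hP0 (Polynomial.content_eq_zero_iff.mp h))
  refine ⟨((b : ℤ) : ℚ) / (P.content : ℚ), div_ne_zero hb0 hcont, ?_⟩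
  have hPfact : P = C P.content * P.primPart := P.eq_C_content_mul_primPart
  have hmapP : P.map (algebraMap ℤ ℚ) = C (P.content : ℚ) * (intMinpoly γ).map (algebraMap ℤ ℚ) := by
    conv_lhs => rw [hPfact]
    rw [Polynomial.map_mul, Polynomial.map_C]
    rfl
  have hb' : P.map (algebraMap ℤ ℚ) = C ((b : ℤ) : ℚ) * μ := hb2.trans hsmul
  apply mul_left_cancel₀ (show (C (P.content : ℚ)) ≠ 0 by rwa [Ne, Polynomial.C_eq_zero])
  rw [← hmapP, hb', ← mul_assoc, ← Polynomial.C_mul]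
  have hval : (P.content : ℚ) * (((b : ℤ) : ℚ) / (P.content : ℚ)) = ((b : ℤ) : ℚ) := by
    field_simp
  rw [hval]

lemma intMinpoly_dvd {γ : ℂ} (hγ : IsIntegral ℚ γ) {F : Polynomial ℤ}
    (hF : Polynomial.aeval γ F = 0) : intMinpoly γ ∣ F := by
  by_cases hF0 : F = 0
  · rw [hF0]; exact dvd_zero _
  obtain ⟨u, hu, hmap⟩ := intMinpoly_map_eq hγ
  have hμdvd : minpoly ℚ γ ∣ F.map (algebraMap ℤ ℚ) :=
    minpoly.dvd ℚ γ (by rwa [Polynomial.aeval_map_algebraMap])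
  have hcont : ((F.content : ℚ)) ≠ 0 :=
    Int.cast_ne_zero.mpr (fun h => hF0 (Polynomial.content_eq_zero_iff.mp h))
  have hFfact : F.map (algebraMap ℤ ℚ)
      = C (F.content : ℚ) * F.primPart.map (algebraMap ℤ ℚ) := by
    conv_lhs => rw [F.eq_C_content_mul_primPart]
    rw [Polynomial.map_mul, Polynomial.map_C]
    rfl
  have hμQ : minpoly ℚ γ ∣ F.primPart.map (algebraMap ℤ ℚ) := by
    obtain ⟨k, hk⟩ := hμdvd
    refine ⟨C (F.content : ℚ)⁻¹ * k, ?_⟩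
    have : F.primPart.map (algebraMap ℤ ℚ)
        = C (F.content : ℚ)⁻¹ * (F.map (algebraMap ℤ ℚ)) := by
      rw [hFfact, ← mul_assoc, ← Polynomial.C_mul, inv_mul_cancel₀ hcont, Polynomial.C_1, one_mul]
    rw [this, hk]; ring
  have hdvdQ : (intMinpoly γ).map (algebraMap ℤ ℚ) ∣ F.primPart.map (algebraMap ℤ ℚ) := by
    obtain ⟨k, hk⟩ := hμQ
    refine ⟨C u⁻¹ * k, ?_⟩
    rw [hmap, hk]
    have hC : C u * C u⁻¹ = (1 : ℚ[X]) := by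
      rw [← Polynomial.C_mul, mul_inv_cancel₀ hu, Polynomial.C_1]
    calc minpoly ℚ γ * k = (C u * C u⁻¹) * (minpoly ℚ γ * k) := by rw [hC, one_mul]
      _ = C u * minpoly ℚ γ * (C u⁻¹ * k) := by ring
  have h1 : intMinpoly γ ∣ F.primPart :=
    Polynomial.IsPrimitive.dvd_of_fraction_map_dvd_fraction_map
      (Polynomial.isPrimitive_primPart _) hdvdQ
  exact h1.trans (Polynomial.primPart_dvd F)

lemma intMinpoly_natDegree {γ : ℂ} (hγ : IsIntegral ℚ γ) :
    (intMinpoly γ).natDegree = (minpoly ℚ γ).natDegree := by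
  obtain ⟨u, hu, hmap⟩ := intMinpoly_map_eq hγ
  have h1 : ((intMinpoly γ).map (algebraMap ℤ ℚ)).natDegree = (intMinpoly γ).natDegree :=
    Polynomial.natDegree_map_eq_of_injective (fun a b => by exact_mod_cast id) _
  rw [← h1, hmap, Polynomial.natDegree_C_mul hu]

lemma mah_prod {ι : Type*} (s : Finset ι) (f : ι → Polynomial ℂ) (hf : ∀ i ∈ s, f i ≠ 0) :
    mah (∏ i ∈ s, f i) = ∏ i ∈ s, mah (f i) := by
  classical
  induction s using Finset.induction_on with
  | empty => simp [mah]
  | insert a s' hx ih =>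
    rw [Finset.prod_insert hx, Finset.prod_insert hx,
      mah_mul (hf a (Finset.mem_insert_self a s'))
        (Finset.prod_ne_zero_iff.mpr fun i hi => hf i (Finset.mem_insert_of_mem hi)),
      ih fun i hi => hf i (Finset.mem_insert_of_mem hi)]

lemma linear_ne_zero' (a b : ℂ) (ha : a ≠ 0) : C a * X - C b ≠ 0 := fun h => ha (by
  have := congrArg (fun f : Polynomial ℂ => f.coeff 1) h
  simpa using this)

/-- Let `K` be a totally real number field of degree `D` (realized inside `ℝ`), `c > 0`,
`m ≥ 1`. If `p, q ∈ K`, `q > 0`, with `mp, mq` algebraic integers and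
`|p| ≥ c|σ(p)|`, `|q| ≥ c|σ(q)|` for all real embeddings `σ`, then
`H(p/q) ≤ c₂ · max{|p|, q}^D` for a constant `c₂` independent of `p, q`. -/
theorem stmt11 (K : Subfield ℝ) [NumberField K]
    (htotreal : ∀ φ : K →+* ℂ, NumberField.ComplexEmbedding.IsReal φ)
    (D : ℕ) (hD : D = Module.finrank ℚ K)
    (c : ℝ) (hc : 0 < c) (m : ℕ) (hm : 1 ≤ m) :
    ∃ c₂ : ℝ, 0 < c₂ ∧
      ∀ p q : K, 0 < (q : ℝ) →
        IsIntegral ℤ ((m : K) * p) → IsIntegral ℤ ((m : K) * q) →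
        (∀ σ : K →+* ℝ, c * |σ p| ≤ |(p : ℝ)|) →
        (∀ σ : K →+* ℝ, c * |σ q| ≤ |(q : ℝ)|) →
        naiveHeight (((p / q : K) : ℝ) : ℂ) ≤ c₂ * max |(p : ℝ)| (q : ℝ) ^ D := by
  have hm' : (0:ℝ) < m := by exact_mod_cast Nat.lt_of_lt_of_le Nat.zero_lt_one hm
  refine ⟨2 ^ D * (m / c) ^ D, by positivity, ?_⟩
  intro p q hq0 hpint hqint hpdom hqdom
  set R := max |(p : ℝ)| (q : ℝ) with hR
  have hR0 : 0 < R := lt_of_lt_of_le hq0 (le_max_right _ _)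
  have hqne : q ≠ 0 := by
    intro h
    rw [h] at hq0
    simp at hq0
  set α : K := p / q with hα
  set γℂ : ℂ := ((α : ℝ) : ℂ) with hγ
  have hKint : IsIntegral ℚ α := IsIntegral.of_finite ℚ α
  let τ₀ : K →ₐ[ℚ] ℂ := (Complex.ofRealHom.comp K.subtype).toRatAlgHom
  have hγτ : γℂ = τ₀ α := rfl
  have hγint : IsIntegral ℚ γℂ := hγτ ▸ hKint.map τ₀
  have hdeg : (intMinpoly γℂ).natDegree ≤ D := by
    rw [intMinpoly_natDegree hγint, hγτ,
      minpoly.algHom_eq τ₀ (τ₀ : K →+* ℂ).injective α, hD]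
    exact minpoly.natDegree_le α
  -- the auxiliary integer polynomial
  obtain ⟨F, hF⟩ := exists_normPoly K ⟨(m : K) * q, hqint⟩ ⟨(m : K) * p, hpint⟩
  have hFc : F.map (Int.castRingHom ℂ)
      = ∏ τ : K →ₐ[ℚ] ℂ, (C (τ ((m : K) * q)) * X - C (τ ((m : K) * p))) := hF
  have hmqne : (m : K) * q ≠ 0 :=
    mul_ne_zero (Nat.cast_ne_zero.mpr (Nat.one_le_iff_ne_zero.mp hm)) hqne
  have hτq : ∀ τ : K →ₐ[ℚ] ℂ, τ ((m : K) * q) ≠ 0 := fun τ h =>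
    hmqne ((map_eq_zero_iff _ (τ : K →+* ℂ).injective).mp h)
  have hG0 : F.map (Int.castRingHom ℂ) ≠ 0 := by
    rw [hFc]
    exact Finset.prod_ne_zero_iff.mpr fun τ _ => linear_ne_zero' _ _ (hτq τ)
  have hF0 : F ≠ 0 := fun h => hG0 (by rw [h, Polynomial.map_zero])
  have haeval : Polynomial.aeval γℂ F = 0 := by
    have : Polynomial.aeval γℂ F = Polynomial.eval γℂ (F.map (Int.castRingHom ℂ)) := by
      rw [Polynomial.aeval_def, Polynomial.eval_map]
      rfl
    rw [this, hFc, Polynomial.eval_prod]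
    apply Finset.prod_eq_zero (Finset.mem_univ τ₀)
    rw [Polynomial.eval_sub, Polynomial.eval_mul, Polynomial.eval_X, Polynomial.eval_C,
      Polynomial.eval_C, hγτ, ← map_mul, sub_eq_zero]
    congr 1
    field_simp [hα]
    rw [hα]; field_simp
  obtain ⟨h, hFgh⟩ := intMinpoly_dvd hγint haeval
  set g := intMinpoly γℂ with hgdef
  have hg0 : g ≠ 0 := by
    intro h0
    obtain ⟨u, hu, hmap⟩ := intMinpoly_map_eq hγint
    rw [← hgdef, h0, Polynomial.map_zero] at hmap
    exact minpoly.ne_zero hγint (by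
      have := hmap.symm
      rwa [mul_eq_zero, or_iff_right (fun hC => hu (by rwa [Polynomial.C_eq_zero] at hC)),
        ] at this)
  have hh0 : h ≠ 0 := fun h0 => hF0 (by rw [hFgh, h0, mul_zero])
  set gc := g.map (Int.castRingHom ℂ) with hgc
  set hcp := h.map (Int.castRingHom ℂ) with hhc
  have hinj : Function.Injective (Int.castRingHom ℂ) := fun a b hab => Int.cast_injective hab
  have hgc0 : gc ≠ 0 := by
    rw [hgc, Ne, Polynomial.map_eq_zero_iff hinj]
    exact hg0
  have hhc0 : hcp ≠ 0 := by
    rw [hhc, Ne, Polynomial.map_eq_zero_iff hinj]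
    exact hh0
  have hsplit : F.map (Int.castRingHom ℂ) = gc * hcp := by
    rw [hgc, hhc, ← Polynomial.map_mul, ← hFgh]
  -- Mahler measure of F
  have hmahF : mah (F.map (Int.castRingHom ℂ))
      = ∏ τ : K →ₐ[ℚ] ℂ, max ‖τ ((m : K) * q)‖ ‖τ ((m : K) * p)‖ := by
    rw [hFc, mah_prod _ _ fun τ _ => linear_ne_zero' _ _ (hτq τ)]
    exact Finset.prod_congr rfl fun τ _ => mah_linear _ _ (hτq τ)
  -- bound each factor
  have hfactor : ∀ τ : K →ₐ[ℚ] ℂ, max ‖τ ((m : K) * q)‖ ‖τ ((m : K) * p)‖ ≤ m / c * R := by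
    intro τ
    have hreal := htotreal (τ : K →+* ℂ)
    set σ := hreal.embedding with hσ
    have hse : ∀ x : K, ((σ x : ℝ) : ℂ) = τ x := fun x =>
      NumberField.ComplexEmbedding.IsReal.coe_embedding_apply hreal x
    have hnorm : ∀ x : K, ‖τ x‖ = |σ x| := by
      intro x
      rw [← hse x]
      simp [Complex.norm_real, Real.norm_eq_abs]
    have hp' : |σ p| ≤ |(p : ℝ)| / c := (le_div_iff₀' hc).mpr (hpdom σ)
    have hq' : |σ q| ≤ (q : ℝ) / c := by
      have := (le_div_iff₀' hc).mpr (hqdom σ)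
      rwa [abs_of_pos hq0] at this
    apply max_le
    · rw [hnorm, map_mul, abs_mul, map_natCast, Nat.abs_cast]
      calc (m : ℝ) * |σ q| ≤ m * ((q : ℝ) / c) :=
            mul_le_mul_of_nonneg_left hq' (le_of_lt hm')
        _ ≤ m / c * R := by
            rw [div_mul_eq_mul_div, mul_div_assoc]
            gcongr
            exact le_max_right _ _
    · rw [hnorm, map_mul, abs_mul, map_natCast, Nat.abs_cast]
      calc (m : ℝ) * |σ p| ≤ m * (|(p : ℝ)| / c) :=
            mul_le_mul_of_nonneg_left hp' (le_of_lt hm')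
        _ ≤ m / c * R := by
            rw [div_mul_eq_mul_div, mul_div_assoc]
            gcongr
            exact le_max_left _ _
  have hcard : Fintype.card (K →ₐ[ℚ] ℂ) = D := by
    rw [AlgHom.card, hD]
  have hmahF_le : mah (F.map (Int.castRingHom ℂ)) ≤ (m / c * R) ^ D := by
    rw [hmahF]
    calc ∏ τ : K →ₐ[ℚ] ℂ, max ‖τ ((m : K) * q)‖ ‖τ ((m : K) * p)‖
        ≤ ∏ _τ : K →ₐ[ℚ] ℂ, (m / c * R) :=
          Finset.prod_le_prod (fun τ _ => le_trans (norm_nonneg _) (le_max_left _ _))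
            (fun τ _ => hfactor τ)
      _ = (m / c * R) ^ D := by rw [Finset.prod_const, Finset.card_univ, hcard]
  have hmah_gc : mah gc ≤ (m / c * R) ^ D := by
    have h1 : mah (F.map (Int.castRingHom ℂ)) = mah gc * mah hcp := by
      rw [hsplit, mah_mul hgc0 hhc0]
    have h2 : 1 ≤ mah hcp := by
      apply one_le_mah
      have : hcp.leadingCoeff = ((h.leadingCoeff : ℤ) : ℂ) := by
        rw [hhc]
        exact Polynomial.leadingCoeff_map_of_injective hinj h
      rw [this]
      have : (1 : ℝ) ≤ |(h.leadingCoeff : ℝ)| := by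
        have := Int.one_le_abs (Polynomial.leadingCoeff_ne_zero.mpr hh0)
        exact_mod_cast this
      calc (1:ℝ) ≤ |(h.leadingCoeff : ℝ)| := this
        _ = ‖((h.leadingCoeff : ℤ) : ℂ)‖ := by
            rw [Complex.norm_intCast]
    calc mah gc = mah gc * 1 := (mul_one _).symm
      _ ≤ mah gc * mah hcp := mul_le_mul_of_nonneg_left h2 (mah_nonneg _)
      _ = mah (F.map (Int.castRingHom ℂ)) := h1.symm
      _ ≤ (m / c * R) ^ D := hmahF_le
  -- coefficient bound
  have key : ∀ i : ℕ, ((g.coeff i).natAbs : ℝ) ≤ 2 ^ D * (m / c) ^ D * R ^ D := by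
    intro i
    have hcast : ((g.coeff i).natAbs : ℝ) = ‖gc.coeff i‖ := by
      rw [hgc, Polynomial.coeff_map]
      rw [eq_intCast (Int.castRingHom ℂ), Nat.cast_natAbs, Complex.norm_intCast,
        Int.cast_abs]
    rw [hcast]
    calc ‖gc.coeff i‖ ≤ 2 ^ gc.natDegree * mah gc := mah_coeff_le hgc0 i
      _ ≤ 2 ^ D * ((m / c) ^ D * R ^ D) := by
          rw [← mul_pow]
          apply mul_le_mul ?_ hmah_gc (mah_nonneg _) (by positivity)
          apply pow_le_pow_right₀ one_le_two
          exact le_trans Polynomial.natDegree_map_le hdeg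
      _ = 2 ^ D * (m / c) ^ D * R ^ D := by ring
  show naiveHeight γℂ ≤ _
  rw [naiveHeight]
  by_cases hsupp : (intMinpoly γℂ).support.Nonempty
  · obtain ⟨i, _, hieq⟩ := Finset.exists_mem_eq_sup _ hsupp
      (fun i => ((intMinpoly γℂ).coeff i).natAbs)
    rw [hieq]
    exact key i
  · rw [Finset.not_nonempty_iff_eq_empty] at hsupp
    rw [hsupp]
    simp only [Finset.sup_empty, bot_eq_zero', Nat.cast_zero]
    positivity
end
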